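/- The distance-based mechanism is not follower revenue monotonic: there exist a number of units k, a set N of buyers with true types, a set r_s of direct buyers, and a subset r'_s ⊂ r_s such that, when all buyers report truthfully, the seller's revenue Σ_{i∈N} t_i(θ | r'_s) obtained by sending the information only to r'_s strictly exceeds the revenue Σ_{i∈N} t_i(θ | r_s) obtained by sending it to all of r_s. (A concrete witness: k = 2, buyers i_1, i_2, i_3, i_4 with values 5, 20, 6, 15, r_s = {i_1, i_2, i_3}, i_1's follower set {i_4}, priority i_1 ≻ i_2 ≻ i_3 ≻ i_4; restricting to r'_s = {i_1, i_2} raises the revenue from 12 to 15.) -/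

import Mathlib

open scoped Classical NNReal ENNReal

namespace SNA

/-- A reported type `θ'_i = (v'_i, r'_i)`: a (nonnegative) value for one unit together with
the set of followers to whom the buyer forwards the information. -/
abbrev Profile (N : Type*) := N → ℝ≥0 × Finset N

variable {N : Type*} [Fintype N] [DecidableEq N] [LinearOrder N]

/-- `reachIn θ rs m i`: in the digraph induced by the reported profile `θ` and the
seller's direct-buyer set `rs` (the seller links to every member of `rs`, and each buyer
`j` links to every member of `(θ j).2`), there is a directed path from the seller to `i`
using exactly `m + 1` edges. -/
def reachIn (θ : Profile N) (rs : Finset N) : ℕ → N → Prop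
  | 0, i => i ∈ rs
  | m + 1, i => ∃ j, reachIn θ rs m j ∧ i ∈ (θ j).2

/-- Buyer `i` is connected: reachable from the seller. -/
def Connected (θ : Profile N) (rs : Finset N) (i : N) : Prop :=
  ∃ m, reachIn θ rs m i

/-- `N̂`: the set of connected buyers. -/
noncomputable def Nhat (θ : Profile N) (rs : Finset N) : Finset N :=
  Finset.univ.filter (Connected θ rs)

/-- `d(i)`: the length of a shortest directed path from the seller to `i`
(`⊤` if `i` is not connected). -/
noncomputable def dNet (θ : Profile N) (rs : Finset N) (i : N) : ℕ∞ :=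
  sInf {n : ℕ∞ | ∃ m : ℕ, reachIn θ rs m i ∧ n = (m : ℕ∞) + 1}

/-- Reachability from the seller by a directed path that avoids buyer `j`. -/
def reachInAvoid (θ : Profile N) (rs : Finset N) (j : N) : ℕ → N → Prop
  | 0, i => i ∈ rs ∧ i ≠ j
  | m + 1, i => ∃ a, reachInAvoid θ rs j m a ∧ i ∈ (θ a).2 ∧ i ≠ j

/-- `j` is a critical parent of `i`: both are connected, `j ≠ i`, and every directed path
from the seller to `i` passes through `j`. -/
def CriticalParent (θ : Profile N) (rs : Finset N) (j i : N) : Prop :=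
  Connected θ rs i ∧ Connected θ rs j ∧ j ≠ i ∧ ¬ ∃ m, reachInAvoid θ rs j m i

/-- The descendants of `i` in the diffusion critical tree `T(θ)`, i.e. `i` together with
the connected buyers lying in the subtree of `T(θ)` rooted at `i`; the ancestors of a
buyer in the diffusion critical tree are exactly its critical parents. -/
noncomputable def desc (θ : Profile N) (rs : Finset N) (i : N) : Finset N :=
  Finset.univ.filter fun j => Connected θ rs j ∧ (j = i ∨ CriticalParent θ rs i j)

/-- `N̂₋ᵢ`: the connected buyers with `i` and all of its descendants in the diffusion
critical tree removed. -/
noncomputable def NhatMinus (θ : Profile N) (rs : Finset N) (i : N) : Finset N :=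
  Nhat θ rs \ desc θ rs i

/-- The `k'`-th highest element of a multiset of values (as an element of `ℝ≥0∞`):
`⊤` if `k' ≤ 0`, and `0` if the multiset has fewer than `k'` elements. -/
noncomputable def kthHighest (s : Multiset ℝ≥0) (k' : ℕ) : ℝ≥0∞ :=
  if k' = 0 then ⊤
  else if s.card < k' then 0
  else ((s.sort (· ≤ ·)).getD (s.card - k') 0 : ℝ≥0)

/-- `v*(S, k')`: the `k'`-th highest reported value among the buyers in `S`. -/
noncomputable def vstar (θ : Profile N) (S : Finset N) (k' : ℕ) : ℝ≥0∞ :=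
  kthHighest (S.val.map fun i => (θ i).1) k'

/-- The priority order on the connected buyers: ascending order of the distance `d(·)`,
with ties broken by the fixed linear order on `N` (mergeSort is stable). -/
noncomputable def prioList (θ : Profile N) (rs : Finset N) : List N :=
  ((Nhat θ rs).sort (· ≤ ·)).mergeSort fun i j => decide (dNet θ rs i ≤ dNet θ rs j)

/-- One run of the distance-based mechanism over a list of buyers (in priority order),
given the current winner set `W` and the remaining number of units `k'`; `extra` is an
additional pool of (dummy) values included in every price computation.
Buyer `i` faces the price `p = v*((N̂₋ᵢ ∖ W) + extra, k')` and wins (paying `p`)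
iff her reported value is at least `p`. -/
noncomputable def runAux (θ : Profile N) (rs : Finset N) (extra : Multiset ℝ≥0) :
    List N → Finset N → ℕ → (N → ℕ) × (N → ℝ≥0)
  | [], _, _ => (fun _ => 0, fun _ => 0)
  | i :: rest, W, k' =>
    let p : ℝ≥0∞ :=
      kthHighest (((NhatMinus θ rs i \ W).val.map fun j => (θ j).1) + extra) k'
    if (((θ i).1 : ℝ≥0∞)) ≥ p then
      let out := runAux θ rs extra rest (insert i W) (k' - 1)
      (Function.update out.1 i 1, Function.update out.2 i p.toNNReal)
    else
      let out := runAux θ rs extra rest W k'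
      (Function.update out.1 i 0, Function.update out.2 i 0)

/-- The distance-based mechanism: `.1` is the allocation rule `f` (each buyer is mapped
to `1` if she wins a unit and to `0` otherwise; unconnected buyers get `0`) and `.2` is
the payment rule `t` (unconnected buyers and losers pay `0`). -/
noncomputable def DBM (k : ℕ) (θ : Profile N) (rs : Finset N) : (N → ℕ) × (N → ℝ≥0) :=
  runAux θ rs 0 (prioList θ rs) ∅ k

/-- The distance-based mechanism with reserve price `vh`: `k` dummy buyers of value `vh`,
attached directly to the seller only (hence lying in every `N̂₋ᵢ` and never being
descendants of a real buyer), are added to every price pool, but they are never processed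
as bidders and never win a unit. -/
noncomputable def DBMres (k : ℕ) (vh : ℝ≥0) (θ : Profile N) (rs : Finset N) :
    (N → ℕ) × (N → ℝ≥0) :=
  runAux θ rs (Multiset.replicate k vh) (prioList θ rs) ∅ k

/-- The No-Diffusion-VCG mechanism: VCG applied to the direct buyers only. -/
noncomputable def NDVCG (k : ℕ) (θ : Profile N) (rs : Finset N) : (N → ℕ) × (N → ℝ≥0) :=
  (fun i => if i ∈ rs ∧ (((θ i).1 : ℝ≥0∞)) ≥ vstar θ (rs.erase i) k then 1 else 0,
   fun i => if i ∈ rs ∧ (((θ i).1 : ℝ≥0∞)) ≥ vstar θ (rs.erase i) k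
     then (vstar θ (rs.erase i) k).toNNReal else 0)

/-- The FCFS-F mechanism: the first `k` connected buyers in the priority order get a
unit for free. -/
noncomputable def FCFS (k : ℕ) (θ : Profile N) (rs : Finset N) : (N → ℕ) × (N → ℝ≥0) :=
  (fun i => if i ∈ (prioList θ rs).take k then 1 else 0, fun _ => 0)



section Example

def θex : Profile (Fin 4) := ![(5, {3}), (20, ∅), (6, ∅), (15, ∅)]

def rsA : Finset (Fin 4) := {0, 1, 2}
def rsB : Finset (Fin 4) := {0, 1}

lemma follow (j i : Fin 4) : i ∈ (θex j).2 ↔ (j = 0 ∧ i = 3) := by revert j i; decide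

lemma reachC (rs : Finset (Fin 4)) (h0 : (0:Fin 4) ∈ rs) :
    ∀ m i, reachIn θex rs m i ↔ (m = 0 ∧ i ∈ rs) ∨ (m = 1 ∧ i = 3) := by
  intro m
  induction m with
  | zero => intro i; simp [reachIn]
  | succ m ih =>
    intro i
    simp only [reachIn, follow]
    constructor
    · rintro ⟨j, hj, rfl, rfl⟩
      rcases (ih 0).1 hj with ⟨rfl, -⟩ | ⟨-, h⟩
      · exact Or.inr ⟨rfl, rfl⟩
      · exact absurd h (by decide)
    · rintro (⟨h, -⟩ | ⟨hm, rfl⟩)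
      · exact absurd h (by omega)
      · exact ⟨0, (ih 0).2 (by simp_all), rfl, rfl⟩

lemma avoidC (rs : Finset (Fin 4)) (h0 : (0:Fin 4) ∈ rs) (x : Fin 4) :
    ∀ m i, reachInAvoid θex rs x m i ↔
      (m = 0 ∧ i ∈ rs ∧ i ≠ x) ∨ (m = 1 ∧ i = 3 ∧ x ≠ 3 ∧ x ≠ 0) := by
  intro m
  induction m with
  | zero => intro i; simp [reachInAvoid]
  | succ m ih =>
    intro i
    simp only [reachInAvoid, follow]
    constructor
    · rintro ⟨a, ha, ⟨rfl, rfl⟩, hne⟩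
      rcases (ih 0).1 ha with ⟨rfl, -, hx⟩ | ⟨-, h, -⟩
      · exact Or.inr ⟨rfl, rfl, Ne.symm hne, Ne.symm hx⟩
      · exact absurd h (by decide)
    · rintro (⟨h, -⟩ | ⟨hm, rfl, hx3, hx0⟩)
      · exact absurd h (by omega)
      · have hm0 : m = 0 := by omega
        subst hm0
        exact ⟨0, (ih 0).2 (Or.inl ⟨rfl, h0, Ne.symm hx0⟩), ⟨rfl, rfl⟩, Ne.symm hx3⟩

lemma connC (rs : Finset (Fin 4)) (h0 : (0:Fin 4) ∈ rs) (i : Fin 4) :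
    Connected θex rs i ↔ (i ∈ rs ∨ i = 3) := by
  constructor
  · rintro ⟨m, hm⟩
    rcases (reachC rs h0 m i).1 hm with ⟨-, h⟩ | ⟨-, h⟩ <;> tauto
  · rintro (h | h)
    · exact ⟨0, (reachC rs h0 0 i).2 (Or.inl ⟨rfl, h⟩)⟩
    · exact ⟨1, (reachC rs h0 1 i).2 (Or.inr ⟨rfl, h⟩)⟩

lemma exAvoid (rs : Finset (Fin 4)) (h0 : (0:Fin 4) ∈ rs) (x i : Fin 4) :
    (∃ m, reachInAvoid θex rs x m i) ↔
      ((i ∈ rs ∧ i ≠ x) ∨ (i = 3 ∧ x ≠ 3 ∧ x ≠ 0)) := by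
  constructor
  · rintro ⟨m, hm⟩
    rcases (avoidC rs h0 x m i).1 hm with ⟨-, h⟩ | ⟨-, h⟩ <;> tauto
  · rintro (h | h)
    · exact ⟨0, (avoidC rs h0 x 0 i).2 (Or.inl ⟨rfl, h⟩)⟩
    · exact ⟨1, (avoidC rs h0 x 1 i).2 (Or.inr ⟨rfl, h⟩)⟩

lemma NhatA : Nhat θex rsA = Finset.univ := by
  ext i
  simp only [Nhat, Finset.mem_filter, Finset.mem_univ, true_and, iff_true,
    connC rsA (by decide)]
  revert i; decide

lemma NhatB : Nhat θex rsB = {0, 1, 3} := by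
  ext i
  simp only [Nhat, Finset.mem_filter, Finset.mem_univ, true_and,
    connC rsB (by decide)]
  revert i; decide

lemma dNet_eq_of (θ : Profile (Fin 4)) (rs : Finset (Fin 4)) (i : Fin 4) (m0 : ℕ)
    (h : ∀ m, reachIn θ rs m i ↔ m = m0) : dNet θ rs i = (m0 : ℕ∞) + 1 := by
  have hset : {n : ℕ∞ | ∃ m : ℕ, reachIn θ rs m i ∧ n = (m : ℕ∞) + 1}
      = {(m0 : ℕ∞) + 1} := by
    ext n
    simp only [Set.mem_setOf_eq, Set.mem_singleton_iff, h]
    constructor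
    · rintro ⟨m, rfl, rfl⟩; rfl
    · rintro rfl; exact ⟨m0, rfl, rfl⟩
  rw [dNet, hset, sInf_singleton]

lemma dmem (rs : Finset (Fin 4)) (h0 : (0:Fin 4) ∈ rs) (i : Fin 4) (hi : i ∈ rs)
    (h3 : i ≠ 3) : dNet θex rs i = 1 := by
  have := dNet_eq_of θex rs i 0 (fun m => by
    rw [reachC rs h0 m i]
    constructor
    · rintro (⟨rfl, -⟩ | ⟨-, h⟩) <;> tauto
    · rintro rfl; exact Or.inl ⟨rfl, hi⟩)
  simpa using this

lemma d3 (rs : Finset (Fin 4)) (h0 : (0:Fin 4) ∈ rs) (h3 : (3:Fin 4) ∉ rs) :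
    dNet θex rs 3 = 2 := by
  have := dNet_eq_of θex rs 3 1 (fun m => by
    rw [reachC rs h0 m 3]
    constructor
    · rintro (⟨rfl, h⟩ | ⟨h, -⟩) <;> tauto
    · rintro rfl; exact Or.inr ⟨rfl, rfl⟩)
  rw [this]; rfl

lemma finset_sort_eq (s : Finset (Fin 4)) (l : List (Fin 4))
    (hl : l.Pairwise (· ≤ ·)) (h : (↑l : Multiset (Fin 4)) = s.val) :
    s.sort (· ≤ ·) = l := by
  refine List.Perm.eq_of_pairwise' (Finset.pairwise_sort _ _) hl (Multiset.coe_eq_coe.mp ?_)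
  rw [Finset.sort_eq, ← h]

lemma prioA : prioList θex rsA = [0, 1, 2, 3] := by
  have hs : (Nhat θex rsA).sort (· ≤ ·) = [0, 1, 2, 3] := by
    apply finset_sort_eq _ _ (by decide)
    rw [NhatA]; decide
  rw [prioList, hs]
  apply List.mergeSort_of_pairwise
  have d0 : dNet θex rsA 0 = 1 := dmem rsA (by decide) 0 (by decide) (by decide)
  have d1 : dNet θex rsA 1 = 1 := dmem rsA (by decide) 1 (by decide) (by decide)
  have d2 : dNet θex rsA 2 = 1 := dmem rsA (by decide) 2 (by decide) (by decide)
  have d3' : dNet θex rsA 3 = 2 := d3 rsA (by decide) (by decide)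
  simp only [List.pairwise_cons, List.mem_cons, List.mem_singleton, decide_eq_true_eq, d0, d1, d2, d3']
  refine ⟨?_, ?_, ?_, ?_⟩ <;> try (intro a ha; rcases ha with rfl | rfl | rfl | h <;> simp_all)
  all_goals simp

lemma prioB : prioList θex rsB = [0, 1, 3] := by
  have hs : (Nhat θex rsB).sort (· ≤ ·) = [0, 1, 3] := by
    apply finset_sort_eq _ _ (by decide)
    rw [NhatB]; decide
  rw [prioList, hs]
  apply List.mergeSort_of_pairwise
  have d0 : dNet θex rsB 0 = 1 := dmem rsB (by decide) 0 (by decide) (by decide)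
  have d1 : dNet θex rsB 1 = 1 := dmem rsB (by decide) 1 (by decide) (by decide)
  have d3' : dNet θex rsB 3 = 2 := d3 rsB (by decide) (by decide)
  simp only [List.pairwise_cons, List.mem_cons, List.mem_singleton, decide_eq_true_eq, d0, d1, d3']
  refine ⟨?_, ?_, ?_⟩ <;> try (intro a ha; rcases ha with rfl | rfl | h <;> simp_all)
  all_goals simp

lemma descC (rs : Finset (Fin 4)) (h0 : (0:Fin 4) ∈ rs) (i : Fin 4) :
    desc θex rs i = Finset.univ.filter (fun j => (j ∈ rs ∨ j = 3) ∧
      (j = i ∨ ((j ∈ rs ∨ j = 3) ∧ (i ∈ rs ∨ i = 3) ∧ i ≠ j ∧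
        ¬((j ∈ rs ∧ j ≠ i) ∨ (j = 3 ∧ i ≠ 3 ∧ i ≠ 0))))) := by
  ext j
  simp only [desc, Finset.mem_filter, CriticalParent, connC rs h0, exAvoid rs h0]

lemma descA0 : desc θex rsA 0 = {0, 3} := by rw [descC rsA (by decide)]; decide
lemma descA1 : desc θex rsA 1 = {1} := by rw [descC rsA (by decide)]; decide
lemma descA2 : desc θex rsA 2 = {2} := by rw [descC rsA (by decide)]; decide
lemma descA3 : desc θex rsA 3 = {3} := by rw [descC rsA (by decide)]; decide
lemma descB0 : desc θex rsB 0 = {0, 3} := by rw [descC rsB (by decide)]; decide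
lemma descB1 : desc θex rsB 1 = {1} := by rw [descC rsB (by decide)]; decide
lemma descB3 : desc θex rsB 3 = {3} := by rw [descC rsB (by decide)]; decide

lemma kth_top (s : Multiset ℝ≥0) : kthHighest s 0 = ⊤ := by rw [kthHighest]; simp

lemma kth_small (s : Multiset ℝ≥0) (k : ℕ) (hk : k ≠ 0) (hc : s.card < k) :
    kthHighest s k = 0 := by
  rw [kthHighest]; simp [hk, hc]

lemma kth_eq (l : List ℝ≥0) (k : ℕ) (hk : k ≠ 0) (hc : ¬ l.length < k)
    (hl : l.Pairwise (· ≤ ·)) :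
    kthHighest ↑l k = ((l.getD (l.length - k) 0 : ℝ≥0) : ℝ≥0∞) := by
  have hs : (↑l : Multiset ℝ≥0).sort (· ≤ ·) = l :=
    List.Perm.eq_of_pairwise' (Multiset.pairwise_sort _ _) hl
      (Multiset.coe_eq_coe.mp (Multiset.sort_eq _ _))
  rw [kthHighest]
  simp [hk, Multiset.coe_card, hc, hs]


lemma vθ0 : (θex 0).1 = 5 := rfl
lemma vθ1 : (θex 1).1 = 20 := rfl
lemma vθ2 : (θex 2).1 = 6 := rfl
lemma vθ3 : (θex 3).1 = 15 := rfl

lemma NMA0 : NhatMinus θex rsA 0 = {1, 2} := by rw [NhatMinus, NhatA, descA0]; decide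
lemma NMA1 : NhatMinus θex rsA 1 = {0, 2, 3} := by rw [NhatMinus, NhatA, descA1]; decide
lemma NMA2 : NhatMinus θex rsA 2 = {0, 1, 3} := by rw [NhatMinus, NhatA, descA2]; decide
lemma NMA3 : NhatMinus θex rsA 3 = {0, 1, 2} := by rw [NhatMinus, NhatA, descA3]; decide
lemma NMB0 : NhatMinus θex rsB 0 = {1} := by rw [NhatMinus, NhatB, descB0]; decide
lemma NMB1 : NhatMinus θex rsB 1 = {0, 3} := by rw [NhatMinus, NhatB, descB1]; decide
lemma NMB3 : NhatMinus θex rsB 3 = {0, 1} := by rw [NhatMinus, NhatB, descB3]; decide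

lemma pool_eq (S : Finset (Fin 4)) (l : List (Fin 4)) (h : S.val = ↑l)
    (l' : List ℝ≥0) (h' : l.map (fun j => (θex j).1) = l') :
    ((S.val.map fun j => (θex j).1) + 0 : Multiset ℝ≥0) = ↑l' := by
  rw [h, add_zero, ← h']
  rfl

lemma pA0 : kthHighest (((NhatMinus θex rsA 0 \ ∅).val.map fun j => (θex j).1) + 0) 2
    = ((6 : ℝ≥0) : ℝ≥0∞) := by
  have h : NhatMinus θex rsA 0 \ ∅ = {1, 2} := by rw [NMA0]; decide
  rw [h, pool_eq {1,2} [1,2] (by decide) [20, 6] (by simp [θex]),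
    show (↑[(20:ℝ≥0), 6] : Multiset ℝ≥0) = ↑[(6:ℝ≥0), 20] from
      Quot.sound (List.Perm.swap _ _ _),
    kth_eq _ 2 (by norm_num) (by norm_num) (by norm_num)]
  rfl

lemma pA1 : kthHighest (((NhatMinus θex rsA 1 \ ∅).val.map fun j => (θex j).1) + 0) 2
    = ((6 : ℝ≥0) : ℝ≥0∞) := by
  have h : NhatMinus θex rsA 1 \ ∅ = {0, 2, 3} := by rw [NMA1]; decide
  rw [h, pool_eq {0,2,3} [0,2,3] (by decide) [5, 6, 15] (by simp [θex]),
    kth_eq _ 2 (by norm_num) (by norm_num) (by norm_num)]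
  rfl

lemma pA2 : kthHighest (((NhatMinus θex rsA 2 \ insert 1 ∅).val.map fun j => (θex j).1) + 0) 1
    = ((15 : ℝ≥0) : ℝ≥0∞) := by
  have h : NhatMinus θex rsA 2 \ insert 1 ∅ = {0, 3} := by rw [NMA2]; decide
  rw [h, pool_eq {0,3} [0,3] (by decide) [5, 15] (by simp [θex]),
    kth_eq _ 1 (by norm_num) (by norm_num) (by norm_num)]
  rfl

lemma pA3 : kthHighest (((NhatMinus θex rsA 3 \ insert 1 ∅).val.map fun j => (θex j).1) + 0) 1
    = ((6 : ℝ≥0) : ℝ≥0∞) := by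
  have h : NhatMinus θex rsA 3 \ insert 1 ∅ = {0, 2} := by rw [NMA3]; decide
  rw [h, pool_eq {0,2} [0,2] (by decide) [5, 6] (by simp [θex]),
    kth_eq _ 1 (by norm_num) (by norm_num) (by norm_num)]
  rfl

lemma pB0 : kthHighest (((NhatMinus θex rsB 0 \ ∅).val.map fun j => (θex j).1) + 0) 2
    = 0 := by
  have h : NhatMinus θex rsB 0 \ ∅ = {1} := by rw [NMB0]; decide
  rw [h, pool_eq {1} [1] (by decide) [20] (by simp [θex])]
  exact kth_small _ 2 (by norm_num) (by norm_num)

lemma pB1 : kthHighest (((NhatMinus θex rsB 1 \ insert 0 ∅).val.map fun j => (θex j).1) + 0) 1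
    = ((15 : ℝ≥0) : ℝ≥0∞) := by
  have h : NhatMinus θex rsB 1 \ insert 0 ∅ = {3} := by rw [NMB1]; decide
  rw [h, pool_eq {3} [3] (by decide) [15] (by simp [θex]),
    kth_eq _ 1 (by norm_num) (by norm_num) (by norm_num)]
  rfl

lemma hA : (DBM 2 θex rsA).2 = Function.update (Function.update (Function.update
    (Function.update (fun _ => (0:ℝ≥0)) 3 6) 2 0) 1 6) 0 0 := by
  rw [DBM, prioA]
  simp only [runAux]
  rw [vθ0, pA0, if_neg (by rw [ge_iff_le, ENNReal.coe_le_coe]; norm_num)]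
  rw [vθ1, pA1, if_pos (by rw [ge_iff_le, ENNReal.coe_le_coe]; norm_num)]
  rw [vθ2, pA2, if_neg (by rw [ge_iff_le, ENNReal.coe_le_coe]; norm_num)]
  rw [vθ3, pA3, if_pos (by rw [ge_iff_le, ENNReal.coe_le_coe]; norm_num)]
  simp only [ENNReal.toNNReal_coe]

lemma hB : (DBM 2 θex rsB).2 = Function.update (Function.update (Function.update
    (fun _ => (0:ℝ≥0)) 3 0) 1 15) 0 0 := by
  rw [DBM, prioB]
  simp only [runAux]
  rw [vθ0, pB0, if_pos (by exact zero_le)]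
  rw [vθ1, pB1, if_pos (by rw [ge_iff_le, ENNReal.coe_le_coe]; norm_num)]
  rw [vθ3, kth_top, if_neg (by simp)]
  simp only [ENNReal.toNNReal_coe, show (0:ℝ≥0∞).toNNReal = 0 from rfl]


end Example

/-- The distance-based mechanism is not follower revenue monotonic:
there are a number of units, a set of buyers with (truthfully reported) types, a set of
direct buyers `rs`, and a subset `rs' ⊂ rs` such that sending the information only to
`rs'` yields a strictly larger revenue than sending it to all of `rs`.
(A concrete witness: `k = 2`, buyers with values `5, 20, 6, 15`, `rs = {i₁, i₂, i₃}`,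
`i₁` forwarding to `i₄`; restricting to `rs' = {i₁, i₂}` raises the revenue from `12`
to `15`.) -/
theorem distanceBased_not_followerRevenueMonotonic :
    ∃ (n k : ℕ) (θ : Profile (Fin n)) (rs rs' : Finset (Fin n)),
      rs' ⊂ rs ∧
      ∑ i, ((DBM k θ rs).2 i : ℝ) < ∑ i, ((DBM k θ rs').2 i : ℝ) := by
  refine ⟨4, 2, θex, rsA, rsB, by decide, ?_⟩
  rw [hA, hB, Fin.sum_univ_four, Fin.sum_univ_four]
  norm_num [Function.update_apply, show ¬((2:Fin 4)=0) by decide,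
    show ¬((2:Fin 4)=1) by decide, show ¬((3:Fin 4)=0) by decide,
    show ¬((3:Fin 4)=1) by decide, show ¬((3:Fin 4)=2) by decide]

end SNA
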